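/- Let G be a group, (X,d_X) a nonempty metric space, Ψ a strong homotopy action of G on X, S ⊆ G a finite symmetric subset containing the identity e, k ∈ ℕ, and Λ > 0. Then the quasi-metric d_{Ψ,S,k,Λ} on G × X takes only finite values (i.e. is a metric) if and only if S generates G. -/

import Mathlib

open unitInterval ENNReal

/-- A strong homotopy action of a group `G` on a topological space `X`.
The argument `(g_j, t_j, g_{j-1}, …, g_1, t_1, g_0, x)` is encoded as the list
`[(g_j,t_j),…,(g_1,t_1)]`, the final group element `g_0` and the point `x`.
Continuity (with `G` discrete) is encoded summand-wise: for every length `n` and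
every fixed tuple of group elements, the map is jointly continuous in the
parameters `t_i ∈ [0,1]` and in `x`. -/
structure StrongHomotopyAction (G X : Type*) [Group G] [TopologicalSpace X] where
  toFun : List (G × unitInterval) → G → X → X
  continuous' : ∀ (n : ℕ) (gs : Fin n → G) (g₀ : G),
    Continuous fun p : (Fin n → unitInterval) × X =>
      toFun (List.ofFn fun i => (gs i, p.1 i)) g₀ p.2
  act_zero : ∀ (L₁ L₂ : List (G × unitInterval)) (g g₀ : G) (x : X),
    toFun (L₁ ++ (g, (0 : unitInterval)) :: L₂) g₀ x = toFun L₁ g (toFun L₂ g₀ x)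
  act_one_mid : ∀ (L₁ L₂ : List (G × unitInterval)) (g g' : G) (t : unitInterval)
      (g₀ : G) (x : X),
    toFun (L₁ ++ (g, (1 : unitInterval)) :: (g', t) :: L₂) g₀ x
      = toFun (L₁ ++ (g * g', t) :: L₂) g₀ x
  act_one_last : ∀ (L : List (G × unitInterval)) (g g₀ : G) (x : X),
    toFun (L ++ [(g, (1 : unitInterval))]) g₀ x = toFun L (g * g₀) x
  id_head : ∀ (t : unitInterval) (L : List (G × unitInterval)) (g₀ : G) (x : X),
    toFun (((1 : G), t) :: L) g₀ x = toFun L g₀ x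
  id_mid : ∀ (L₁ L₂ : List (G × unitInterval)) (g : G) (t t' : unitInterval)
      (g₀ : G) (x : X),
    toFun (L₁ ++ (g, t) :: ((1 : G), t') :: L₂) g₀ x = toFun (L₁ ++ (g, t * t') :: L₂) g₀ x
  id_last : ∀ (L : List (G × unitInterval)) (g : G) (t : unitInterval) (x : X),
    toFun (L ++ [(g, t)]) (1 : G) x = toFun L g x
  id_base : ∀ x : X, toFun [] (1 : G) x = x

variable {G X : Type*} [Group G] [MetricSpace X]

/-- `F_g(Ψ,S,k)`: the set of maps `x ↦ Ψ(g_k, t_k, …, g_0, x)` with `g_i ∈ S`,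
`t_i ∈ [0,1]` and `g_k ⋯ g_0 = g`. -/
def FMaps (Ψ : StrongHomotopyAction G X) (S : Set G) (k : ℕ) (g : G) : Set (X → X) :=
  { f | ∃ (L : List (G × unitInterval)) (g₀ : G), L.length = k ∧
      (∀ q ∈ L, q.1 ∈ S) ∧ g₀ ∈ S ∧ (L.map Prod.fst).prod * g₀ = g ∧
      f = fun x => Ψ.toFun L g₀ x }

/-- `S¹_{Ψ,S,k}(g,x)`. -/
def sOne (Ψ : StrongHomotopyAction G X) (S : Set G) (k : ℕ) (z : G × X) : Set (G × X) :=
  { w | ∃ a ∈ S, ∃ b ∈ S, ∃ f ∈ FMaps Ψ S k a, ∃ f' ∈ FMaps Ψ S k b,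
      f z.2 = f' w.2 ∧ w.1 = z.1 * a⁻¹ * b }

/-- `Sⁿ_{Ψ,S,k}(g,x)`, defined inductively; `sIter Ψ S k 1 = sOne Ψ S k`. -/
def sIter (Ψ : StrongHomotopyAction G X) (S : Set G) (k : ℕ) : ℕ → G × X → Set (G × X)
  | 0 => fun z => {z}
  | n + 1 => fun z => ⋃ w ∈ sIter Ψ S k n z, sOne Ψ S k w

open Classical in
/-- The cost of a single step in a chain: the minimum of `Λ·d_X(x,x')`
(allowed when the group components agree) and `1` (allowed when the target lies in
`S¹_{Ψ,S,k}` of the source); `∞` if neither is allowed. -/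
noncomputable def qcost (Ψ : StrongHomotopyAction G X) (S : Set G) (k : ℕ) (Λ : ℝ)
    (z w : G × X) : ℝ≥0∞ :=
  min (if z.1 = w.1 then ENNReal.ofReal (Λ * dist z.2 w.2) else ⊤)
      (if w ∈ sOne Ψ S k z then 1 else ⊤)

/-- The quasi-metric `d_{Ψ,S,k,Λ}` on `G × X`: the infimum over all finite chains
of the sum of the step costs. -/
noncomputable def qdist (Ψ : StrongHomotopyAction G X) (S : Set G) (k : ℕ) (Λ : ℝ)
    (z w : G × X) : ℝ≥0∞ :=
  ⨅ (m : ℕ) (c : Fin (m + 1) → G × X) (_ : c 0 = z) (_ : c (Fin.last m) = w),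
    ∑ i : Fin m, qcost Ψ S k Λ (c i.castSucc) (c i.succ)


section Aux

/-- Extract a chain of finite total cost from `qdist ≠ ⊤`. -/
lemma qdist_exists_chain {Ψ : StrongHomotopyAction G X} {S : Set G} {k : ℕ} {Λ : ℝ}
    {z w : G × X} (h : qdist Ψ S k Λ z w ≠ ⊤) :
    ∃ (m : ℕ) (c : Fin (m + 1) → G × X), c 0 = z ∧ c (Fin.last m) = w ∧
      ∑ i : Fin m, qcost Ψ S k Λ (c i.castSucc) (c i.succ) ≠ ⊤ := by
  rw [qdist] at h
  simp only [ne_eq, iInf_eq_top, not_forall] at h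
  obtain ⟨m, c, h0, hl, hs⟩ := h
  exact ⟨m, c, h0, hl, hs⟩

lemma qdist_le_chain {Ψ : StrongHomotopyAction G X} {S : Set G} {k : ℕ} {Λ : ℝ}
    {z w : G × X} (m : ℕ) (c : Fin (m + 1) → G × X) (h0 : c 0 = z)
    (hl : c (Fin.last m) = w) :
    qdist Ψ S k Λ z w ≤ ∑ i : Fin m, qcost Ψ S k Λ (c i.castSucc) (c i.succ) :=
  iInf_le_of_le m (iInf_le_of_le c (iInf_le_of_le h0 (iInf_le _ hl)))

lemma qdist_self_ne_top {Ψ : StrongHomotopyAction G X} {S : Set G} {k : ℕ} {Λ : ℝ}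
    (z : G × X) : qdist Ψ S k Λ z z ≠ ⊤ := by
  have := qdist_le_chain (Ψ := Ψ) (S := S) (k := k) (Λ := Λ) 0 (fun _ => z) rfl rfl
  simp at this
  simp [this]

/-- Chains with all finite step costs give `ReflTransGen`. -/
lemma chain_reflTransGen {α : Type*} (R : α → α → Prop) :
    ∀ (m : ℕ) (c : Fin (m + 1) → α), (∀ i : Fin m, R (c i.castSucc) (c i.succ)) →
      Relation.ReflTransGen R (c 0) (c (Fin.last m)) := by
  intro m
  induction m with
  | zero => intro c _; exact Relation.ReflTransGen.refl
  | succ n ih =>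
      intro c h
      have h1 := ih (fun i => c i.castSucc) (fun i => by
        have := h i.castSucc
        rwa [Fin.succ_castSucc] at this)
      simp only [Fin.castSucc_zero] at h1
      have h2 : R (c (Fin.last n).castSucc) (c (Fin.last (n + 1))) := by
        have := h (Fin.last n)
        rwa [Fin.succ_last] at this
      exact h1.tail h2

lemma qdist_ne_top_iff {Ψ : StrongHomotopyAction G X} {S : Set G} {k : ℕ} {Λ : ℝ}
    {z w : G × X} :
    qdist Ψ S k Λ z w ≠ ⊤ ↔
      Relation.ReflTransGen (fun a b => qcost Ψ S k Λ a b ≠ ⊤) z w := by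
  constructor
  · intro h
    obtain ⟨m, c, h0, hl, hs⟩ := qdist_exists_chain h
    have hfin : ∀ i : Fin m, qcost Ψ S k Λ (c i.castSucc) (c i.succ) ≠ ⊤ := by
      intro i
      exact ((ENNReal.sum_lt_top.mp (lt_top_iff_ne_top.mpr hs)) i (Finset.mem_univ _)).ne
    have := chain_reflTransGen (fun a b => qcost Ψ S k Λ a b ≠ ⊤) m c hfin
    rwa [h0, hl] at this
  · intro h
    induction h with
    | refl => exact qdist_self_ne_top z
    | tail h1 h2 ih =>
        rename_i b u
        obtain ⟨m, c, h0, hl, hs⟩ := qdist_exists_chain ih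
        set c' : Fin (m + 2) → G × X := Fin.snoc c u with hc'
        have hsum : ∑ i : Fin (m + 1), qcost Ψ S k Λ (c' i.castSucc) (c' i.succ)
            = (∑ i : Fin m, qcost Ψ S k Λ (c i.castSucc) (c i.succ))
              + qcost Ψ S k Λ (c (Fin.last m)) u := by
          rw [Fin.sum_univ_castSucc]
          congr 1
          · refine Finset.sum_congr rfl (fun i _ => ?_)
            rw [Fin.succ_castSucc]
            simp only [hc', Fin.snoc_castSucc]
          · rw [Fin.succ_last]
            simp [hc', Fin.snoc_castSucc, Fin.snoc_last]
        have h0' : c' 0 = z := by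
          rw [hc', show (0 : Fin (m + 2)) = (0 : Fin (m + 1)).castSucc from rfl,
            Fin.snoc_castSucc, h0]
        have hl' : c' (Fin.last (m + 1)) = u := by simp [hc', Fin.snoc_last]
        have hle := qdist_le_chain (Ψ := Ψ) (S := S) (k := k) (Λ := Λ) (m + 1) c' h0' hl'
        rw [hsum, hl] at hle
        exact ne_top_of_le_ne_top (ENNReal.add_ne_top.mpr ⟨hs, h2⟩) hle

lemma toFun_replicate {Ψ : StrongHomotopyAction G X} :
    ∀ (k : ℕ) (g₀ : G) (x : X),
      Ψ.toFun (List.replicate k ((1 : G), (1 : unitInterval))) g₀ x = Ψ.toFun [] g₀ x := by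
  intro k
  induction k with
  | zero => intro g₀ x; rfl
  | succ n ih =>
      intro g₀ x
      rw [List.replicate_succ, Ψ.id_head, ih]

lemma replicate_mem_FMaps {Ψ : StrongHomotopyAction G X} {S : Set G} (k : ℕ)
    (hSone : (1 : G) ∈ S) {g₀ : G} (hg₀ : g₀ ∈ S) :
    (fun x => Ψ.toFun (List.replicate k ((1 : G), (1 : unitInterval))) g₀ x)
      ∈ FMaps Ψ S k g₀ := by
  refine ⟨List.replicate k ((1 : G), (1 : unitInterval)), g₀, by simp, ?_, hg₀, ?_, rfl⟩
  · intro q hq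
    rw [List.eq_of_mem_replicate hq]
    exact hSone
  · simp

/-- One step of cost 1: from `(g, x)` we can reach `(g * s, y)` for a suitable `y`. -/
lemma step_exists {Ψ : StrongHomotopyAction G X} {S : Set G} {k : ℕ} {Λ : ℝ}
    (hSone : (1 : G) ∈ S) (hSsymm : ∀ s ∈ S, s⁻¹ ∈ S) {s : G} (hs : s ∈ S)
    (g : G) (x : X) :
    ∃ y : X, qcost Ψ S k Λ (g, x) (g * s, y) ≠ ⊤ := by
  refine ⟨Ψ.toFun (List.replicate k ((1 : G), (1 : unitInterval))) s⁻¹ x, ?_⟩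
  have hmem : ((g * s, Ψ.toFun (List.replicate k ((1 : G), (1 : unitInterval))) s⁻¹ x)
      : G × X) ∈ sOne Ψ S k (g, x) := by
    refine ⟨s⁻¹, hSsymm s hs, 1, hSone,
      fun z => Ψ.toFun (List.replicate k ((1 : G), (1 : unitInterval))) s⁻¹ z,
      replicate_mem_FMaps k hSone (hSsymm s hs),
      fun z => Ψ.toFun (List.replicate k ((1 : G), (1 : unitInterval))) (1 : G) z,
      replicate_mem_FMaps k hSone hSone, ?_, by group⟩
    simp only [toFun_replicate]
    rw [Ψ.id_base]
  have h1 : qcost Ψ S k Λ (g, x)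
      (g * s, Ψ.toFun (List.replicate k ((1 : G), (1 : unitInterval))) s⁻¹ x) ≤ 1 := by
    refine le_trans (min_le_right _ _) ?_
    rw [if_pos hmem]
  exact ne_top_of_le_ne_top one_ne_top h1

lemma list_reachable {Ψ : StrongHomotopyAction G X} {S : Set G} {k : ℕ} {Λ : ℝ}
    (hSone : (1 : G) ∈ S) (hSsymm : ∀ s ∈ S, s⁻¹ ∈ S) :
    ∀ (l : List G), (∀ s ∈ l, s ∈ S) → ∀ (g : G) (x : X),
      ∃ y : X, Relation.ReflTransGen (fun a b => qcost Ψ S k Λ a b ≠ ⊤)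
        (g, x) (g * l.prod, y) := by
  intro l
  induction l with
  | nil => intro _ g x; exact ⟨x, by simpa using Relation.ReflTransGen.refl⟩
  | cons s l ih =>
      intro hl g x
      obtain ⟨y₁, hy₁⟩ := step_exists (Ψ := Ψ) (Λ := Λ) hSone hSsymm
        (hl s List.mem_cons_self) g x
      obtain ⟨y, hy⟩ := ih (fun t ht => hl t (List.mem_cons_of_mem s ht)) (g * s) y₁
      refine ⟨y, Relation.ReflTransGen.head hy₁ ?_⟩
      rwa [List.prod_cons, ← mul_assoc]

lemma rtg_mem_closure {Ψ : StrongHomotopyAction G X} {S : Set G} {k : ℕ} {Λ : ℝ}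
    {z w : G × X}
    (h : Relation.ReflTransGen (fun a b => qcost Ψ S k Λ a b ≠ ⊤) z w) :
    z.1⁻¹ * w.1 ∈ Subgroup.closure S := by
  induction h with
  | refl => rw [inv_mul_cancel]; exact one_mem _
  | tail h1 h2 ih =>
      rename_i b u
      have hcase : b.1 = u.1 ∨ u ∈ sOne Ψ S k b := by
        by_contra hc
        push_neg at hc
        exact h2 (by simp [qcost, hc.1, hc.2])
      rcases hcase with he | hm
      · rwa [← he]
      · obtain ⟨a, ha, b', hb', f, hf, f', hf', hfe, hw1⟩ := hm
        rw [hw1, show z.1⁻¹ * (b.1 * a⁻¹ * b') = (z.1⁻¹ * b.1) * (a⁻¹ * b') by group]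
        exact mul_mem ih (mul_mem (inv_mem (Subgroup.subset_closure ha))
          (Subgroup.subset_closure hb'))

end Aux

/-- The quasi-metric `d_{Ψ,S,k,Λ}` takes only finite values (i.e. is a metric)
if and only if `S` generates `G`. -/
theorem qdist_finite_iff_generates {G X : Type*} [Group G] [MetricSpace X] [Nonempty X]
    (Ψ : StrongHomotopyAction G X) (S : Set G) (hSfin : S.Finite)
    (hSsymm : ∀ s ∈ S, s⁻¹ ∈ S) (hSone : (1 : G) ∈ S) (k : ℕ) (Λ : ℝ) (hΛ : 0 < Λ) :
    (∀ z w : G × X, qdist Ψ S k Λ z w ≠ ⊤) ↔ Subgroup.closure S = ⊤ := by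
  constructor
  · intro h
    rw [eq_top_iff]
    rintro g -
    obtain ⟨x⟩ := (inferInstance : Nonempty X)
    have hq := h (1, x) (g, x)
    rw [qdist_ne_top_iff] at hq
    have := rtg_mem_closure hq
    simpa using this
  · intro hgen z w
    rw [qdist_ne_top_iff]
    have hmem : z.1⁻¹ * w.1 ∈ Subgroup.closure S := by rw [hgen]; trivial
    have hmem' : z.1⁻¹ * w.1 ∈ Submonoid.closure (S ∪ S⁻¹) := by
      rw [← Subgroup.closure_toSubmonoid]; exact hmem
    obtain ⟨l, hl, hprod⟩ := Submonoid.exists_list_of_mem_closure hmem'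
    have hlS : ∀ s ∈ l, s ∈ S := by
      intro s hsl
      rcases hl s hsl with h1 | h2
      · exact h1
      · simpa using hSsymm _ (Set.mem_inv.mp h2)
    obtain ⟨y, hy⟩ := list_reachable (Ψ := Ψ) (k := k) (Λ := Λ) hSone hSsymm l hlS z.1 z.2
    rw [hprod, mul_inv_cancel_left] at hy
    have hstep : qcost Ψ S k Λ (w.1, y) w ≠ ⊤ := by
      have : qcost Ψ S k Λ (w.1, y) w ≤ ENNReal.ofReal (Λ * dist y w.2) := by
        rw [qcost, if_pos rfl]
        exact min_le_left _ _
      exact ne_top_of_le_ne_top ENNReal.ofReal_ne_top this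
    exact (show Relation.ReflTransGen _ z (w.1, y) from hy).tail hstep
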